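/- Let $y_1 < \cdots < y_k$ be real numbers, let $Y$ take value $y_i$ with probability $p_i \in (0,1)$, $\sum_i p_i = 1$, and let $\tau \sim \mathrm{Unif}(0,1)$ be independent of $Y$. Fix weights $\alpha_i \in (0,1)$ with $\sum_{i=1}^k \alpha_i = 1$, and define $P = \sum_{i=1}^k \alpha_i \mathbf{1}(y_i > Y) + \tau \sum_{i=1}^k \alpha_i \mathbf{1}(y_i = Y)$. Let $F$ be the CDF of $P$ and $F_0(t) = \min(\max(t,0),1)$ the CDF of $\mathrm{Unif}(0,1)$. Then $\sup_{\epsilon \in \mathbb{R}} |F(\epsilon) - F_0(\epsilon)| = \max_{1 \le i \le k} \left| \sum_{j=1}^i (p_j - \alpha_j) \right|$. -/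
import Mathlib


open MeasureTheory ProbabilityTheory Set


noncomputable def aN {k : ℕ} (f : Fin k → ℝ) : ℕ → ℝ := fun n => if h : n < k then f ⟨n, h⟩ else 0

lemma aN_coe {k : ℕ} (f : Fin k → ℝ) (i : Fin k) : aN f ↑i = f i := by
  simp [aN, i.isLt]

lemma sum_Iic_eq_range {k : ℕ} (f : Fin k → ℝ) (i : Fin k) :
    ∑ j ∈ Finset.Iic i, f j = ∑ n ∈ Finset.range (↑i + 1), aN f n := by
  classical
  have h1 : ∑ j ∈ Finset.Iic i, f j = ∑ j : Fin k, if j ≤ i then f j else 0 := by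
    rw [show (∑ j : Fin k, if j ≤ i then f j else 0)
        = ∑ j : Fin k, if j ∈ Finset.Iic i then f j else 0 by simp,
      Finset.sum_ite_mem, Finset.univ_inter]
  have h2 : ∀ j : Fin k, (if j ≤ i then f j else 0) = (fun n => if n ≤ (i:ℕ) then aN f n else 0) ↑j := by
    intro j
    simp only [aN, j.isLt, dif_pos, Fin.eta, Fin.le_def]
  rw [h1, Finset.sum_congr rfl (fun j _ => h2 j),
    Fin.sum_univ_eq_sum_range (fun n => if n ≤ (i:ℕ) then aN f n else 0) k]
  rw [← Finset.sum_filter]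
  congr 1
  ext n
  have := i.isLt
  simp only [Finset.mem_filter, Finset.mem_range]
  omega

noncomputable def BN {k : ℕ} (α : Fin k → ℝ) (n : ℕ) : ℝ := 1 - ∑ j ∈ Finset.range n, aN α j

noncomputable def gN {k : ℕ} (α : Fin k → ℝ) (n : ℕ) (t : ℝ) : ℝ :=
  min (max ((t - BN α (n + 1)) / aN α n) 0) 1

lemma BN_succ {k : ℕ} (α : Fin k → ℝ) (n : ℕ) : BN α (n + 1) = BN α n - aN α n := by
  simp [BN, Finset.sum_range_succ]; ring

lemma BN_zero {k : ℕ} (α : Fin k → ℝ) : BN α 0 = 1 := by simp [BN]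

lemma aN_nonneg {k : ℕ} {α : Fin k → ℝ} (hα : ∀ i, α i ∈ Set.Ioo (0:ℝ) 1) (n : ℕ) :
    0 ≤ aN α n := by
  unfold aN; split
  · exact le_of_lt (hα _).1
  · exact le_refl 0

lemma aN_pos {k : ℕ} {α : Fin k → ℝ} (hα : ∀ i, α i ∈ Set.Ioo (0:ℝ) 1) {n : ℕ} (hn : n < k) :
    0 < aN α n := by
  unfold aN; rw [dif_pos hn]; exact (hα _).1

lemma BN_anti {k : ℕ} {α : Fin k → ℝ} (hα : ∀ i, α i ∈ Set.Ioo (0:ℝ) 1) :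
    Antitone (BN α) := by
  apply antitone_nat_of_succ_le
  intro n
  rw [BN_succ]
  have := aN_nonneg hα n
  linarith

lemma gN_nonneg {k : ℕ} (α : Fin k → ℝ) (n : ℕ) (t : ℝ) : 0 ≤ gN α n t :=
  le_min (le_max_right _ _) zero_le_one

lemma gN_le_one {k : ℕ} (α : Fin k → ℝ) (n : ℕ) (t : ℝ) : gN α n t ≤ 1 :=
  min_le_right _ _

lemma gN_term {k : ℕ} {α : Fin k → ℝ} (hα : ∀ i, α i ∈ Set.Ioo (0:ℝ) 1) {n : ℕ} (hn : n < k)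
    (t : ℝ) : aN α n * gN α n t = min t (BN α n) - min t (BN α (n + 1)) := by
  have ha : 0 < aN α n := aN_pos hα hn
  have hB : BN α (n + 1) = BN α n - aN α n := BN_succ α n
  unfold gN
  rw [mul_min_of_nonneg _ _ ha.le, mul_max_of_nonneg _ _ ha.le,
    mul_div_cancel₀ _ ha.ne', mul_zero, mul_one]
  simp only [min_def, max_def]
  split_ifs <;> linarith

lemma gN_mono {k : ℕ} {α : Fin k → ℝ} (hα : ∀ i, α i ∈ Set.Ioo (0:ℝ) 1) {n : ℕ}
    (hn : n + 1 < k) (t : ℝ) : gN α n t ≤ gN α (n + 1) t := by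
  rcases le_or_gt t (BN α (n + 1)) with h | h
  · have : (t - BN α (n + 1)) / aN α n ≤ 0 :=
      div_nonpos_of_nonpos_of_nonneg (by linarith) (aN_nonneg hα n)
    calc gN α n t ≤ max ((t - BN α (n+1)) / aN α n) 0 := min_le_left _ _
    _ = 0 := max_eq_right this
    _ ≤ gN α (n+1) t := gN_nonneg α _ t
  · have ha : 0 < aN α (n + 1) := aN_pos hα hn
    have hB : BN α (n + 2) = BN α (n + 1) - aN α (n + 1) := BN_succ α (n + 1)
    have h1 : 1 ≤ (t - BN α (n + 2)) / aN α (n + 1) := by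
      rw [le_div_iff₀ ha]; linarith
    calc gN α n t ≤ 1 := gN_le_one α n t
    _ = gN α (n+1) t := by
        unfold gN
        rw [min_eq_right (le_trans h1 (le_max_left _ _))]

lemma sum_aN_gN {k : ℕ} {α : Fin k → ℝ} (hα : ∀ i, α i ∈ Set.Ioo (0:ℝ) 1)
    (hαsum : ∑ i, α i = 1) (t : ℝ) :
    ∑ n ∈ Finset.range k, aN α n * gN α n t = min (max t 0) 1 := by
  have hBk : BN α k = 0 := by
    have : ∑ i : Fin k, α i = ∑ n ∈ Finset.range k, aN α n := by
      rw [← Fin.sum_univ_eq_sum_range (aN α) k]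
      exact Finset.sum_congr rfl fun i _ => (aN_coe α i).symm
    simp [BN, ← this, hαsum]
  rw [Finset.sum_congr rfl (fun n hn => gN_term hα (Finset.mem_range.mp hn) t),
    Finset.sum_range_sub' (fun n => min t (BN α n)) k, BN_zero, hBk]
  rcases le_total t 0 with h | h
  · rw [max_eq_right h, min_eq_left (by linarith : t ≤ 1), min_eq_left h]
    simp [min_eq_left, zero_le_one]
  · rw [max_eq_left h, min_eq_right h]
    rcases le_total t 1 with h1 | h1
    · rw [min_eq_left h1]; ring
    · rw [min_eq_right h1]; ring

lemma gN_at_BN_lt {k : ℕ} {α : Fin k → ℝ} (hα : ∀ i, α i ∈ Set.Ioo (0:ℝ) 1)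
    {n m : ℕ} (h : n < m) : gN α n (BN α m) = 0 := by
  have hB : BN α m ≤ BN α (n + 1) := BN_anti hα h
  have : (BN α m - BN α (n + 1)) / aN α n ≤ 0 :=
    div_nonpos_of_nonpos_of_nonneg (by linarith) (aN_nonneg hα n)
  unfold gN
  rw [max_eq_right this]
  exact min_eq_left zero_le_one

lemma gN_at_BN_ge {k : ℕ} {α : Fin k → ℝ} (hα : ∀ i, α i ∈ Set.Ioo (0:ℝ) 1)
    {n m : ℕ} (hnk : n < k) (h : m ≤ n) : gN α n (BN α m) = 1 := by
  have ha : 0 < aN α n := aN_pos hα hnk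
  have hB : BN α (n + 1) = BN α n - aN α n := BN_succ α n
  have hmn : BN α n ≤ BN α m := BN_anti hα h
  have h1 : 1 ≤ (BN α m - BN α (n + 1)) / aN α n := by
    rw [le_div_iff₀ ha]; linarith
  unfold gN
  rw [min_eq_right (le_trans h1 (le_max_left _ _))]

lemma abel_identity (d g : ℕ → ℝ) (k : ℕ) (h : ∑ j ∈ Finset.range k, d j = 0) :
    ∑ n ∈ Finset.range k, d n * g n
      = ∑ n ∈ Finset.range k, (∑ j ∈ Finset.range (n + 1), d j) * (g n - g (n + 1)) := by
  set D : ℕ → ℝ := fun n => ∑ j ∈ Finset.range n, d j with hD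
  have step : ∀ n, d n * g n = D (n + 1) * (g n - g (n + 1)) + (D (n + 1) * g (n + 1) - D n * g n) := by
    intro n
    have : d n = D (n + 1) - D n := by simp [hD, Finset.sum_range_succ]
    rw [this]; ring
  rw [Finset.sum_congr rfl (fun n _ => step n), Finset.sum_add_distrib,
    Finset.sum_range_sub (fun n => D n * g n) k]
  have h0 : D 0 = 0 := by simp [hD]
  have hk : D k = 0 := h
  rw [hk, h0]
  ring

lemma abel_bound {k : ℕ} (hk : 0 < k) {α : Fin k → ℝ} (hα : ∀ i, α i ∈ Set.Ioo (0:ℝ) 1)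
    (d : ℕ → ℝ) (hdk : ∑ j ∈ Finset.range k, d j = 0)
    (M : ℝ) (hM0 : 0 ≤ M)
    (hM : ∀ m, m < k → |∑ j ∈ Finset.range (m + 1), d j| ≤ M) (t : ℝ) :
    |∑ n ∈ Finset.range k, d n * gN α n t| ≤ M := by
  rw [abel_identity d (fun n => gN α n t) k hdk]
  obtain ⟨k', rfl⟩ : ∃ k', k = k' + 1 := ⟨k - 1, (Nat.succ_pred_eq_of_pos hk).symm⟩
  rw [Finset.sum_range_succ]
  have hlast : (∑ j ∈ Finset.range (k' + 1), d j) * (gN α k' t - gN α (k' + 1) t) = 0 := by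
    rw [hdk]; ring
  rw [hlast, add_zero]
  calc |∑ n ∈ Finset.range k', (∑ j ∈ Finset.range (n + 1), d j) * (gN α n t - gN α (n + 1) t)|
      ≤ ∑ n ∈ Finset.range k', |(∑ j ∈ Finset.range (n + 1), d j) * (gN α n t - gN α (n + 1) t)| :=
        Finset.abs_sum_le_sum_abs _ _
    _ ≤ ∑ n ∈ Finset.range k', M * (gN α (n + 1) t - gN α n t) := by
        apply Finset.sum_le_sum
        intro n hn
        have hn' : n + 1 < k' + 1 := Nat.succ_lt_succ (Finset.mem_range.mp hn)
        have hg : gN α n t ≤ gN α (n + 1) t := gN_mono hα hn' t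
        rw [abs_mul, abs_sub_comm (gN α n t), abs_of_nonneg (sub_nonneg.mpr hg)]
        exact mul_le_mul_of_nonneg_right (hM n (by omega)) (by linarith)
    _ = M * (gN α k' t - gN α 0 t) := by
        rw [← Finset.mul_sum, Finset.sum_range_sub (fun n => gN α n t) k']
    _ ≤ M * 1 := by
        apply mul_le_mul_of_nonneg_left _ hM0
        have := gN_le_one α k' t
        have := gN_nonneg α 0 t
        linarith
    _ = M := mul_one M

lemma tau_measure_Iic {Ω : Type*} [MeasurableSpace Ω] (μ : Measure Ω) (τ : Ω → ℝ)
    (hτ : Measurable τ) (hτlaw : μ.map τ = volume.restrict (Set.Ioo (0:ℝ) 1)) (c : ℝ) :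
    (μ (τ ⁻¹' Set.Iic c)).toReal = min (max c 0) 1 := by
  have h1 : μ (τ ⁻¹' Set.Iic c) = (μ.map τ) (Set.Iic c) :=
    (Measure.map_apply hτ measurableSet_Iic).symm
  rw [h1, hτlaw, Measure.restrict_apply measurableSet_Iic]
  rcases le_or_gt c 0 with h0 | h0
  · have : Set.Iic c ∩ Set.Ioo (0:ℝ) 1 = ∅ := by
      ext x; simp only [Set.mem_inter_iff, Set.mem_Iic, Set.mem_Ioo, Set.mem_empty_iff_false,
        iff_false, not_and]
      intro hx h; linarith
    rw [this, measure_empty, ENNReal.toReal_zero, max_eq_right h0, min_eq_left zero_le_one]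
  · rcases lt_or_ge c 1 with h1 | h1
    · have : Set.Iic c ∩ Set.Ioo (0:ℝ) 1 = Set.Ioc 0 c := by
        ext x; simp only [Set.mem_inter_iff, Set.mem_Iic, Set.mem_Ioo, Set.mem_Ioc]
        constructor
        · rintro ⟨hx, h2, h3⟩; exact ⟨h2, hx⟩
        · rintro ⟨h2, h3⟩; exact ⟨h3, h2, by linarith⟩
      rw [this, Real.volume_Ioc, sub_zero, ENNReal.toReal_ofReal h0.le,
        max_eq_left h0.le, min_eq_left h1.le]
    · have : Set.Iic c ∩ Set.Ioo (0:ℝ) 1 = Set.Ioo 0 1 := by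
        ext x; simp only [Set.mem_inter_iff, Set.mem_Iic, Set.mem_Ioo]
        constructor
        · rintro ⟨hx, h2⟩; exact h2
        · rintro ⟨h2, h3⟩; exact ⟨by linarith, h2, h3⟩
      rw [this, Real.volume_Ioo, sub_zero, ENNReal.toReal_ofReal zero_le_one,
        max_eq_left h0.le, min_eq_right h1]

/-- KS distance of the weighted randomized rank from the uniform distribution equals the
maximal absolute partial-sum discrepancy between the atom probabilities `p` and weights `α`. -/
theorem ks_distance_weighted_rank
    {Ω : Type*} [MeasurableSpace Ω] (μ : Measure Ω) [IsProbabilityMeasure μ]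
    (k : ℕ) (hk : 0 < k) (y : Fin k → ℝ) (hy : StrictMono y)
    (p : Fin k → ℝ) (hp : ∀ i, p i ∈ Set.Ioo (0:ℝ) 1) (hpsum : ∑ i, p i = 1)
    (α : Fin k → ℝ) (hα : ∀ i, α i ∈ Set.Ioo (0:ℝ) 1) (hαsum : ∑ i, α i = 1)
    (Y τ : Ω → ℝ) (hY : Measurable Y) (hτ : Measurable τ)
    (hYlaw : ∀ i, (μ {ω | Y ω = y i}).toReal = p i)
    (hYsupp : μ {ω | ∀ i, Y ω ≠ y i} = 0)
    (hτlaw : μ.map τ = volume.restrict (Set.Ioo (0:ℝ) 1))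
    (hindep : IndepFun Y τ μ)
    (P : Ω → ℝ)
    (hP : ∀ ω, P ω =
      (∑ i, α i * (if y i > Y ω then 1 else 0)) +
        τ ω * (∑ i, α i * (if y i = Y ω then 1 else 0)))
    (F F₀ : ℝ → ℝ)
    (hF : ∀ t, F t = (μ {ω | P ω ≤ t}).toReal)
    (hF₀ : ∀ t, F₀ t = min (max t 0) 1) :
    (⨆ ε : ℝ, |F ε - F₀ ε|) = ⨆ i : Fin k, |∑ j ∈ Finset.Iic i, (p j - α j)| := by
  classical
  haveI : Nonempty (Fin k) := ⟨⟨0, hk⟩⟩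
  set d : ℕ → ℝ := fun n => aN p n - aN α n with hd
  have hsum_a : ∑ n ∈ Finset.range k, aN α n = 1 := by
    rw [← Fin.sum_univ_eq_sum_range (aN α) k, ← hαsum]
    exact Finset.sum_congr rfl fun i _ => aN_coe α i
  have hsum_q : ∑ n ∈ Finset.range k, aN p n = 1 := by
    rw [← Fin.sum_univ_eq_sum_range (aN p) k, ← hpsum]
    exact Finset.sum_congr rfl fun i _ => aN_coe p i
  have hdk : ∑ j ∈ Finset.range k, d j = 0 := by
    rw [hd, Finset.sum_sub_distrib, hsum_q, hsum_a, sub_self]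
  -- the deviation of Y for each atom
  have hPω : ∀ (i : Fin k) (ω : Ω), Y ω = y i →
      P ω = (1 - ∑ j ∈ Finset.Iic i, α j) + τ ω * α i := by
    intro i ω hω
    rw [hP ω, hω]
    have h1 : ∀ j : Fin k, α j * (if y j > y i then (1:ℝ) else 0) = if i < j then α j else 0 := by
      intro j
      by_cases h : i < j
      · rw [if_pos h, if_pos (show y j > y i from hy h), mul_one]
      · rw [if_neg h, if_neg (fun hc => h (hy.lt_iff_lt.mp hc)), mul_zero]
    have h2 : ∀ j : Fin k, α j * (if y j = y i then (1:ℝ) else 0) = if j = i then α j else 0 := by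
      intro j
      by_cases h : j = i
      · subst h; rw [if_pos rfl, if_pos rfl, mul_one]
      · rw [if_neg h, if_neg (fun hc => h (hy.injective hc)), mul_zero]
    rw [Finset.sum_congr rfl (fun j _ => h1 j), Finset.sum_congr rfl (fun j _ => h2 j),
      Finset.sum_ite_eq' Finset.univ i α, if_pos (Finset.mem_univ i)]
    have h3 : ∑ j : Fin k, (if i < j then α j else 0)
        = 1 - ∑ j ∈ Finset.Iic i, α j := by
      have hsplit : ∀ j : Fin k, (if i < j then α j else 0) + (if j ≤ i then α j else 0) = α j := by
        intro j
        rcases le_or_gt j i with h | h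
        · rw [if_neg (not_lt.mpr h), if_pos h, zero_add]
        · rw [if_pos h, if_neg (not_le.mpr h), add_zero]
      have hIic : ∑ j : Fin k, (if j ≤ i then α j else 0) = ∑ j ∈ Finset.Iic i, α j := by
        rw [show (∑ j : Fin k, if j ≤ i then α j else 0)
            = ∑ j : Fin k, if j ∈ Finset.Iic i then α j else 0 by simp,
          Finset.sum_ite_mem, Finset.univ_inter]
      have := Finset.sum_congr rfl (fun j (_ : j ∈ Finset.univ) => (hsplit j).symm)
      rw [hαsum] at this
      rw [Finset.sum_add_distrib, hIic] at this
      linarith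
    rw [h3]
  -- key computation of F
  have hFt : ∀ t, F t = ∑ n ∈ Finset.range k, aN p n * gN α n t := by
    intro t
    set c : Fin k → ℝ := fun i => (t - (1 - ∑ j ∈ Finset.Iic i, α j)) / α i with hc
    set S : Fin k → Set Ω := fun i => Y ⁻¹' {y i} ∩ τ ⁻¹' (Set.Iic (c i)) with hS
    have hSmeas : ∀ i, MeasurableSet (S i) :=
      fun i => (hY (measurableSet_singleton _)).inter (hτ measurableSet_Iic)
    have hSdisj : Pairwise (Function.onFun Disjoint S) := by
      intro i j hij
      apply Set.disjoint_left.mpr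
      rintro ω ⟨h1, _⟩ ⟨h2, _⟩
      exact hij (hy.injective (h1.symm.trans h2))
    have hae : {ω | P ω ≤ t} =ᵐ[μ] ⋃ i, S i := by
      have h0 : ∀ᵐ ω ∂μ, ∃ i, Y ω = y i := by
        rw [ae_iff]
        convert hYsupp using 2
        ext ω
        push_neg
        rfl
      rw [Filter.eventuallyEq_set]
      filter_upwards [h0] with ω hω
      obtain ⟨i, hi⟩ := hω
      simp only [Set.mem_setOf_eq, Set.mem_iUnion, hS, Set.mem_inter_iff, Set.mem_preimage,
        Set.mem_singleton_iff, Set.mem_Iic]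
      constructor
      · intro hPt
        refine ⟨i, hi, ?_⟩
        rw [hPω i ω hi] at hPt
        rw [hc, le_div_iff₀ (hα i).1]
        linarith
      · rintro ⟨j, hj1, hj2⟩
        rw [hPω j ω hj1]
        rw [hc, le_div_iff₀ (hα j).1] at hj2
        linarith
    rw [hF t, measure_congr hae, measure_iUnion hSdisj hSmeas, tsum_fintype]
    have hfin : ∀ i ∈ Finset.univ, μ (S i) ≠ ⊤ := fun i _ => measure_ne_top μ _
    rw [ENNReal.toReal_sum hfin]
    have hterm : ∀ i : Fin k, (μ (S i)).toReal = p i * min (max (c i) 0) 1 := by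
      intro i
      rw [hS]
      simp only []
      rw [hindep.measure_inter_preimage_eq_mul {y i} (Set.Iic (c i))
        (measurableSet_singleton _) measurableSet_Iic, ENNReal.toReal_mul]
      have hYi : (μ (Y ⁻¹' {y i})).toReal = p i := by
        rw [show Y ⁻¹' {y i} = {ω | Y ω = y i} from rfl]
        exact hYlaw i
      rw [hYi, tau_measure_Iic μ τ hτ hτlaw (c i)]
    rw [Finset.sum_congr rfl (fun i _ => hterm i)]
    have hterm2 : ∀ i : Fin k, p i * min (max (c i) 0) 1 = (fun n => aN p n * gN α n t) ↑i := by
      intro i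
      have e1 : c i = (t - BN α ((i : ℕ) + 1)) / aN α ↑i := by
        show (t - (1 - ∑ j ∈ Finset.Iic i, α j)) / α i = _
        rw [aN_coe α i, BN, sum_Iic_eq_range α i]
      show p i * min (max (c i) 0) 1 = aN p ↑i * gN α ↑i t
      unfold gN
      rw [e1, aN_coe p i]
    rw [Finset.sum_congr rfl (fun i _ => hterm2 i)]
    exact Fin.sum_univ_eq_sum_range (fun n => aN p n * gN α n t) k
  have hDiff : ∀ t, F t - F₀ t = ∑ n ∈ Finset.range k, d n * gN α n t := by
    intro t
    rw [hFt t, hF₀ t, ← sum_aN_gN hα hαsum t, ← Finset.sum_sub_distrib]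
    exact Finset.sum_congr rfl fun n _ => by rw [hd]; ring
  have hps : ∀ i : Fin k, ∑ j ∈ Finset.Iic i, (p j - α j) = ∑ j ∈ Finset.range (↑i + 1), d j := by
    intro i
    rw [sum_Iic_eq_range (fun j => p j - α j) i]
    apply Finset.sum_congr rfl
    intro n hn
    have hnk : n < k := lt_of_lt_of_le (Finset.mem_range.mp hn) i.isLt
    simp [aN, hnk, hd]
  set M := ⨆ i : Fin k, |∑ j ∈ Finset.Iic i, (p j - α j)| with hM
  have hMbdd : BddAbove (Set.range fun i : Fin k => |∑ j ∈ Finset.Iic i, (p j - α j)|) :=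
    (Set.finite_range _).bddAbove
  have hM0 : 0 ≤ M := le_trans (abs_nonneg _) (le_ciSup hMbdd ⟨0, hk⟩)
  have hMle : ∀ m, m < k → |∑ j ∈ Finset.range (m + 1), d j| ≤ M := by
    intro m hm
    rw [← hps ⟨m, hm⟩]
    exact le_ciSup hMbdd ⟨m, hm⟩
  have hBound : ∀ t, |F t - F₀ t| ≤ M := by
    intro t
    rw [hDiff t]
    exact abel_bound hk hα d hdk M hM0 hMle t
  have hbdd2 : BddAbove (Set.range fun ε : ℝ => |F ε - F₀ ε|) := by
    refine ⟨M, ?_⟩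
    rintro x ⟨ε, rfl⟩
    exact hBound ε
  apply le_antisymm
  · exact ciSup_le hBound
  · apply ciSup_le
    intro i
    have him : ((i : ℕ) + 1) ≤ k := i.isLt
    have hattain : F (BN α ((i : ℕ) + 1)) - F₀ (BN α ((i : ℕ) + 1))
        = -∑ j ∈ Finset.range ((i : ℕ) + 1), d j := by
      rw [hDiff]
      rw [← Finset.sum_range_add_sum_Ico (fun n => d n * gN α n (BN α ((i : ℕ) + 1))) him]
      have hz : ∑ n ∈ Finset.range ((i : ℕ) + 1), d n * gN α n (BN α ((i : ℕ) + 1)) = 0 := by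
        apply Finset.sum_eq_zero
        intro n hn
        rw [gN_at_BN_lt hα (Finset.mem_range.mp hn), mul_zero]
      have ho : ∑ n ∈ Finset.Ico ((i : ℕ) + 1) k, d n * gN α n (BN α ((i : ℕ) + 1))
          = ∑ n ∈ Finset.Ico ((i : ℕ) + 1) k, d n := by
        apply Finset.sum_congr rfl
        intro n hn
        obtain ⟨h1, h2⟩ := Finset.mem_Ico.mp hn
        rw [gN_at_BN_ge hα h2 h1, mul_one]
      rw [hz, ho, zero_add, Finset.sum_Ico_eq_sub d him, hdk]
      ring
    calc |∑ j ∈ Finset.Iic i, (p j - α j)|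
        = |F (BN α ((i : ℕ) + 1)) - F₀ (BN α ((i : ℕ) + 1))| := by
          rw [hattain, abs_neg, hps i]
      _ ≤ ⨆ ε : ℝ, |F ε - F₀ ε| := le_ciSup hbdd2 _
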